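/- Let s > 0, let ν be a probability distribution on [s, ∞), and let X_2, …, X_n (n ≥ 2) be independent random variables each distributed according to ν. Set μ = E_{X∼ν}[s/X] and assume 0 < μ < 1. Then the expected social cost of mechanism K on the input (s, X_2, …, X_n) equals (s/μ) · [ 1 − (1/n) · (1 − μ)(1 − (1 − μ)^n)/μ ]. -/

import Mathlib

open MeasureTheory ProbabilityTheory Finset

/-- Social cost of mechanism K on a cost vector `t` (whose minimum is `⨅ i, t i`):
`SC_K(t) = ∑_k p_k^K · t_k` with `p_k^K = (1/t_k) · ∫_0^{min t} ∏_{i ≠ k} (1 − x/t_i) dx`. -/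
noncomputable def SCK (n : ℕ) (t : Fin n → ℝ) : ℝ :=
  ∑ k, ((1 / t k) * ∫ x in (0:ℝ)..(⨅ i, t i), ∏ i ∈ univ.erase k, (1 - x / t i)) * t k

lemma integral_prod_of_iIndep {Ω : Type*} [MeasureSpace Ω] [IsProbabilityMeasure (ℙ : Measure Ω)]
    {ι : Type*} {Y : ι → Ω → ℝ}
    (hindep : iIndepFun Y ℙ) (hmeas : ∀ i, Measurable (Y i))
    (s : Finset ι) :
    ∫ ω, ∏ i ∈ s, Y i ω ∂ℙ = ∏ i ∈ s, ∫ ω, Y i ω ∂ℙ := by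
  classical
  induction s using Finset.induction_on with
  | empty => simp
  | @insert a s ha ih =>
    simp_rw [Finset.prod_insert ha]
    have hI : IndepFun (Y a) (∏ j ∈ s, Y j) (ℙ : Measure Ω) :=
      (iIndepFun.indepFun_finset_prod_of_notMem hindep hmeas ha).symm
    have hpe : (∏ j ∈ s, Y j) = fun ω => ∏ j ∈ s, Y j ω := by
      ext ω; simp [Finset.prod_apply]
    have hm2 : AEStronglyMeasurable (∏ j ∈ s, Y j) (ℙ : Measure Ω) := by
      rw [hpe]; exact (Finset.measurable_prod s fun i _ => hmeas i).aestronglyMeasurable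
    have h2 := hI.integral_fun_mul_eq_mul_integral ((hmeas a).aestronglyMeasurable) hm2
    simp only [Finset.prod_apply] at h2
    have h3 : integral ℙ (∏ j ∈ s, Y j) = ∫ ω, ∏ j ∈ s, Y j ω ∂ℙ := by rw [hpe]
    rw [h2, ih]

lemma integral_pow_linear (s μ : ℝ) (hs : s ≠ 0) (hμ : μ ≠ 0) (m : ℕ) :
    ∫ x in (0:ℝ)..s, (1 - x * (μ/s))^m
      = (s/μ) * (1 - (1-μ)^(m+1)) / (m+1) := by
  have hm : ((m:ℝ)+1) ≠ 0 := by positivity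
  have key : ∀ x : ℝ, HasDerivAt (fun x : ℝ => (-(s/μ)/((m:ℝ)+1)) * (1 - x * (μ/s))^(m+1))
      ((1 - x * (μ/s))^m) x := by
    intro x
    have h1 : HasDerivAt (fun x : ℝ => 1 - x * (μ/s)) (-(μ/s)) x := by
      simpa using ((hasDerivAt_id x).mul_const (μ/s)).const_sub 1
    have h2 := (h1.pow (m+1)).const_mul (-(s/μ)/((m:ℝ)+1))
    refine h2.congr_deriv ?_
    simp only [Nat.add_sub_cancel, Nat.cast_add, Nat.cast_one]
    field_simp
  rw [intervalIntegral.integral_eq_sub_of_hasDerivAt (fun x _ => key x)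
    ((Continuous.pow (by continuity) m).intervalIntegrable 0 s)]
  have hss : s * (μ/s) = μ := by field_simp
  rw [hss]
  field_simp
  rw [mul_zero, sub_zero, div_self hs, one_pow]
  ring

/-- For `s > 0`, a probability distribution `ν` on `[s, ∞)`, and independent
`X_2, …, X_n ∼ ν` (with `n ≥ 2`), setting `μ = E_{X∼ν}[s/X] ∈ (0,1)`, the expected social cost
of mechanism K on the input `(s, X_2, …, X_n)` equals
`(s/μ) · (1 − (1/n) · (1 − μ)(1 − (1 − μ)^n)/μ)`. -/
theorem mechanismK_expected_socialCost_eq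
    {Ω : Type*} [MeasureSpace Ω] [IsProbabilityMeasure (ℙ : Measure Ω)]
    (n : ℕ) [NeZero n] (hn : 2 ≤ n)
    (s : ℝ) (hs : 0 < s)
    (ν : Measure ℝ) [IsProbabilityMeasure ν] (hν : ν (Set.Iio s) = 0)
    (X : Fin n → Ω → ℝ) (hX0 : ∀ ω, X 0 ω = s)
    (hmeas : ∀ i, Measurable (X i))
    (hindep : iIndepFun X ℙ)
    (hdist : ∀ i : Fin n, i ≠ 0 → Measure.map (X i) ℙ = ν)
    (μ : ℝ) (hμ : μ = ∫ x, s / x ∂ν) (hμ0 : 0 < μ) (hμ1 : μ < 1) :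
    (∫ ω, SCK n (fun i => X i ω) ∂ℙ)
      = (s / μ) * (1 - (1 / (n : ℝ)) * ((1 - μ) * (1 - (1 - μ) ^ n) / μ)) := by
  classical
  have hs' : s ≠ 0 := ne_of_gt hs
  have hμ' : μ ≠ 0 := ne_of_gt hμ0
  -- a.e. each X i ≥ s
  have hae : ∀ᵐ ω ∂(ℙ : Measure Ω), ∀ i, s ≤ X i ω := by
    rw [MeasureTheory.ae_all_iff]
    intro i
    rcases eq_or_ne i 0 with rfl | hi
    · filter_upwards with ω
      rw [hX0]
    · have hz : (ℙ : Measure Ω) {ω | X i ω < s} = 0 := by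
        have he : {ω | X i ω < s} = X i ⁻¹' (Set.Iio s) := rfl
        rw [he, ← Measure.map_apply (hmeas i) measurableSet_Iio, hdist i hi]
        exact hν
      rw [ae_iff]
      simpa [not_le] using hz
  -- the good set
  set G : Set Ω := ⋂ i, X i ⁻¹' (Set.Ici s) with hGdef
  have hGmeas : MeasurableSet G :=
    MeasurableSet.iInter fun i => (hmeas i) measurableSet_Ici
  have hGmem : ∀ ω, ω ∈ G ↔ ∀ i, s ≤ X i ω := by
    intro ω; simp [hGdef]
  have hGc : (ℙ : Measure Ω) Gᶜ = 0 := by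
    have hset : Gᶜ = {a | ¬ ∀ i, s ≤ X i a} := by
      ext ω; simp [hGdef]
    rw [hset]
    exact ae_iff.mp hae
  -- factor bound
  have hfac : ∀ (ω : Ω), (∀ i, s ≤ X i ω) → ∀ x ∈ Set.Ioc (0:ℝ) s, ∀ k : Fin n,
      ‖∏ i ∈ univ.erase k, (1 - x / X i ω)‖ ≤ 1 := by
    intro ω hω x hx k
    have h0 : ∀ i ∈ univ.erase k, 0 ≤ 1 - x / X i ω := by
      intro i _
      have hXi : 0 < X i ω := lt_of_lt_of_le hs (hω i)
      have : x / X i ω ≤ 1 := (div_le_one hXi).mpr (hx.2.trans (hω i))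
      linarith
    have h1 : ∀ i ∈ univ.erase k, 1 - x / X i ω ≤ 1 := by
      intro i _
      have hXi : 0 < X i ω := lt_of_lt_of_le hs (hω i)
      have : 0 ≤ x / X i ω := div_nonneg hx.1.le hXi.le
      linarith
    rw [Real.norm_eq_abs, abs_of_nonneg (Finset.prod_nonneg h0)]
    exact Finset.prod_le_one h0 h1
  -- rewrite SCK a.e.
  have hcong : ∀ᵐ ω ∂(ℙ : Measure Ω), SCK n (fun i => X i ω)
      = ∑ k, ∫ x in (0:ℝ)..s, ∏ i ∈ univ.erase k, (1 - x / X i ω) := by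
    filter_upwards [hae] with ω hω
    have hinf : ⨅ i, X i ω = s := by
      apply le_antisymm
      · exact (ciInf_le (Set.Finite.bddBelow (Set.finite_range _)) 0).trans_eq (hX0 ω)
      · exact le_ciInf hω
    simp only [SCK]
    rw [hinf]
    refine Finset.sum_congr rfl fun k _ => ?_
    have hk : X k ω ≠ 0 := by
      have := hω k; intro h; rw [h] at this; linarith
    rw [one_div, mul_comm ((X k ω)⁻¹), mul_assoc, inv_mul_cancel₀ hk, mul_one]
  rw [integral_congr_ae hcong]
  -- joint measurability
  have hFmeas : ∀ k : Fin n,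
      Measurable (fun z : Ω × ℝ => ∏ i ∈ univ.erase k, (1 - z.2 / X i z.1)) := by
    intro k
    exact Finset.measurable_prod _ fun i _ =>
      measurable_const.sub (measurable_snd.div ((hmeas i).comp measurable_fst))
  haveI : IsFiniteMeasure (volume.restrict (Set.Ioc (0:ℝ) s)) := by
    constructor
    rw [Measure.restrict_apply_univ, Real.volume_Ioc]
    exact ENNReal.ofReal_lt_top
  -- integrability on the product space
  have hFint : ∀ k : Fin n,
      Integrable (fun z : Ω × ℝ => ∏ i ∈ univ.erase k, (1 - z.2 / X i z.1))
        ((ℙ : Measure Ω).prod (volume.restrict (Set.Ioc (0:ℝ) s))) := by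
    intro k
    set P := (ℙ : Measure Ω).prod (volume.restrict (Set.Ioc (0:ℝ) s))
    have h1 : ∀ᵐ z ∂P, z.1 ∈ G := by
      rw [ae_iff]
      refine measure_mono_null (fun z hz => ?_) (show P (Gᶜ ×ˢ (Set.univ : Set ℝ)) = 0 by
        rw [Measure.prod_prod, hGc, zero_mul])
      exact ⟨hz, trivial⟩
    have h2 : ∀ᵐ z ∂P, z.2 ∈ Set.Ioc (0:ℝ) s := by
      rw [ae_iff]
      refine measure_mono_null (fun z hz => ?_)
        (show P ((Set.univ : Set Ω) ×ˢ (Set.Ioc (0:ℝ) s)ᶜ) = 0 by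
          rw [Measure.prod_prod, Measure.restrict_apply measurableSet_Ioc.compl]
          simp)
      exact ⟨trivial, hz⟩
    refine Integrable.mono' (integrable_const 1) ((hFmeas k).aestronglyMeasurable) ?_
    filter_upwards [h1, h2] with z hz1 hz2
    exact hfac z.1 ((hGmem z.1).mp hz1) z.2 hz2 k
  -- swap integrals
  have hswap : ∀ k : Fin n,
      ∫ ω, (∫ x in (0:ℝ)..s, ∏ i ∈ univ.erase k, (1 - x / X i ω)) ∂ℙ
        = ∫ x in Set.Ioc (0:ℝ) s, (∫ ω, ∏ i ∈ univ.erase k, (1 - x / X i ω) ∂ℙ) := by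
    intro k
    simp_rw [intervalIntegral.integral_of_le hs.le]
    exact integral_integral_swap (hFint k)
  -- integrability of each summand in ω
  have hGkint : ∀ k : Fin n,
      Integrable (fun ω => ∫ x in (0:ℝ)..s, ∏ i ∈ univ.erase k, (1 - x / X i ω)) ℙ := by
    intro k
    refine Integrable.mono' (integrable_const s) ?_ ?_
    · simp_rw [intervalIntegral.integral_of_le hs.le]
      exact (StronglyMeasurable.integral_prod_right'
        ((hFmeas k).stronglyMeasurable)).aestronglyMeasurable
    · filter_upwards [hae] with ω hω
      have hb := intervalIntegral.norm_integral_le_of_norm_le_const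
        (C := 1) (f := fun x => ∏ i ∈ univ.erase k, (1 - x / X i ω)) (a := 0) (b := s) ?_
      · rw [Real.norm_eq_abs] at hb ⊢
        calc |∫ x in (0:ℝ)..s, ∏ i ∈ univ.erase k, (1 - x / X i ω)| ≤ 1 * |s - 0| := hb
          _ = s := by rw [abs_of_pos (by linarith : (0:ℝ) < s - 0)]; ring
      · intro x hx
        rw [Set.uIoc_of_le hs.le] at hx
        exact hfac ω hω x hx k
  rw [integral_finset_sum univ (fun k _ => hGkint k)]
  -- nu facts
  have hνae : ∀ᵐ y ∂ν, s ≤ y := by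
    rw [ae_iff]
    simp only [not_le]; exact hν
  have hinvν : Integrable (fun y : ℝ => y⁻¹) ν := by
    refine Integrable.mono' (integrable_const s⁻¹) measurable_inv.aestronglyMeasurable ?_
    filter_upwards [hνae] with y hy
    have hy0 : 0 < y := lt_of_lt_of_le hs hy
    rw [Real.norm_eq_abs, abs_of_nonneg (inv_nonneg.mpr hy0.le)]
    exact inv_anti₀ hs hy
  have hinvval : ∫ y, y⁻¹ ∂ν = μ / s := by
    have hst : μ = s * ∫ y, y⁻¹ ∂ν := by
      rw [hμ, ← integral_const_mul]
      simp_rw [div_eq_mul_inv]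
    rw [hst]; field_simp
  -- expectation of a single factor
  have hEfac : ∀ (x : ℝ) (i : Fin n), (∫ ω, (1 - x / X i ω) ∂ℙ)
      = if i = 0 then 1 - x / s else 1 - x * (μ / s) := by
    intro x i
    rcases eq_or_ne i 0 with rfl | hi
    · simp only [if_pos rfl]
      have hc : (fun ω => 1 - x / X 0 ω) = fun _ : Ω => 1 - x / s := by
        ext ω; rw [hX0]
      rw [hc, integral_const]
      simp
    · simp only [if_neg hi]
      have hmap : (∫ ω, (1 - x / X i ω) ∂ℙ) = ∫ y, (1 - x / y) ∂ν := by
        rw [← hdist i hi, integral_map (hmeas i).aemeasurable]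
        exact (measurable_const.sub (measurable_const.div measurable_id)).aestronglyMeasurable
      rw [hmap]
      have hsimp : (fun y : ℝ => 1 - x / y) = fun y : ℝ => 1 - x * y⁻¹ := by
        ext y; rw [div_eq_mul_inv]
      rw [hsimp, integral_sub (integrable_const 1) (hinvν.const_mul x),
        integral_const_mul, hinvval]
      simp
  -- expectation of the product over erase k
  have hEprod : ∀ (x : ℝ) (k : Fin n),
      (∫ ω, ∏ i ∈ univ.erase k, (1 - x / X i ω) ∂ℙ)
        = ∏ i ∈ univ.erase k, (if i = 0 then 1 - x / s else 1 - x * (μ / s)) := by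
    intro x k
    have hind2 : iIndepFun (fun i ω => 1 - x / X i ω) ℙ :=
      hindep.comp (fun i y => 1 - x / y)
        (fun i => measurable_const.sub (measurable_const.div measurable_id))
    rw [integral_prod_of_iIndep hind2
      (fun i => measurable_const.sub (measurable_const.div (hmeas i))) (univ.erase k)]
    exact Finset.prod_congr rfl fun i _ => hEfac x i
  -- cardinalities
  have hcard0 : (univ.erase (0 : Fin n)).card = n - 1 := by
    rw [Finset.card_erase_of_mem (Finset.mem_univ _), Finset.card_univ, Fintype.card_fin]
  have hterm : ∀ k : Fin n,
      (∫ ω, (∫ x in (0:ℝ)..s, ∏ i ∈ univ.erase k, (1 - x / X i ω)) ∂ℙ)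
        = ∫ x in Set.Ioc (0:ℝ) s,
            ∏ i ∈ univ.erase k, (if i = 0 then 1 - x / s else 1 - x * (μ / s)) := by
    intro k
    rw [hswap k]
    simp_rw [hEprod]
  rw [Finset.sum_congr rfl (fun k _ => hterm k)]
  rw [← Finset.add_sum_erase univ _ (Finset.mem_univ (0 : Fin n))]
  have hT0 : (∫ x in Set.Ioc (0:ℝ) s,
        ∏ i ∈ univ.erase (0:Fin n), (if i = 0 then 1 - x / s else 1 - x * (μ / s)))
      = ∫ x in (0:ℝ)..s, (1 - x * (μ/s))^(n-1) := by
    rw [intervalIntegral.integral_of_le hs.le]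
    congr 1
    ext x
    rw [Finset.prod_congr rfl (fun i hi => if_neg (Finset.ne_of_mem_erase hi)),
      Finset.prod_const, hcard0]
  have hTk : ∀ k : Fin n, k ≠ 0 →
      (∫ x in Set.Ioc (0:ℝ) s,
          ∏ i ∈ univ.erase k, (if i = 0 then 1 - x / s else 1 - x * (μ / s)))
      = ∫ x in (0:ℝ)..s, (1 - x / s) * (1 - x * (μ/s))^(n-2) := by
    intro k hk
    rw [intervalIntegral.integral_of_le hs.le]
    congr 1
    ext x
    have h0mem : (0 : Fin n) ∈ univ.erase k :=
      Finset.mem_erase.mpr ⟨Ne.symm hk, Finset.mem_univ _⟩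
    rw [← Finset.mul_prod_erase _ _ h0mem, if_pos rfl]
    congr 1
    rw [Finset.prod_congr rfl (fun i hi => if_neg (Finset.ne_of_mem_erase hi)),
      Finset.prod_const]
    congr 1
    rw [Finset.card_erase_of_mem h0mem, Finset.card_erase_of_mem (Finset.mem_univ _),
      Finset.card_univ, Fintype.card_fin]
    omega
  rw [hT0, Finset.sum_congr rfl (fun k hk => hTk k (Finset.ne_of_mem_erase hk)),
    Finset.sum_const, hcard0, nsmul_eq_mul]
  -- pointwise rewriting of the generic-k integrand
  have hc1 : Continuous (fun x : ℝ => (1 - x * (μ/s))^(n-1)) :=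
    (continuous_const.sub (continuous_id.mul continuous_const)).pow _
  have hc2 : Continuous (fun x : ℝ => (1 - x * (μ/s))^(n-2)) :=
    (continuous_const.sub (continuous_id.mul continuous_const)).pow _
  have hB : (∫ x in (0:ℝ)..s, (1 - x / s) * (1 - x * (μ/s))^(n-2))
      = μ⁻¹ * ((∫ x in (0:ℝ)..s, (1 - x * (μ/s))^(n-1))
          - (1-μ) * ∫ x in (0:ℝ)..s, (1 - x * (μ/s))^(n-2)) := by
    have hpt : ∀ x : ℝ, (1 - x / s) * (1 - x * (μ/s))^(n-2)
        = μ⁻¹ * ((1 - x * (μ/s))^(n-1) - (1-μ) * (1 - x * (μ/s))^(n-2)) := by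
      intro x
      have hpow : (1 - x * (μ/s))^(n-1) = (1 - x * (μ/s))^(n-2) * (1 - x * (μ/s)) := by
        rw [← pow_succ]
        congr 1
        omega
      rw [hpow]
      field_simp
      ring
    simp_rw [hpt]
    rw [intervalIntegral.integral_const_mul,
      intervalIntegral.integral_sub (hc1.intervalIntegrable 0 s)
        ((hc2.intervalIntegrable 0 s).const_mul (1-μ)),
      intervalIntegral.integral_const_mul]
  -- numeric casts
  have e1 : n - 1 + 1 = n := by omega
  have e2 : n - 2 + 1 = n - 1 := by omega
  have c1 : ((n-1:ℕ):ℝ) = (n:ℝ) - 1 := by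
    have h1 : 1 ≤ n := by omega
    rw [Nat.cast_sub h1]; norm_num
  have c2 : ((n-2:ℕ):ℝ) = (n:ℝ) - 2 := by
    rw [Nat.cast_sub hn]; norm_num
  have hJ1 : (∫ x in (0:ℝ)..s, (1 - x * (μ/s))^(n-1))
      = (s/μ) * (1 - (1-μ)^n) / (n:ℝ) := by
    rw [integral_pow_linear s μ hs' hμ' (n-1), e1, c1]
    have : (n:ℝ) - 1 + 1 = (n:ℝ) := by ring
    rw [this]
  have hJ2 : (∫ x in (0:ℝ)..s, (1 - x * (μ/s))^(n-2))
      = (s/μ) * (1 - (1-μ)^(n-1)) / ((n:ℝ) - 1) := by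
    rw [integral_pow_linear s μ hs' hμ' (n-2), e2, c2]
    have : (n:ℝ) - 2 + 1 = (n:ℝ) - 1 := by ring
    rw [this]
  rw [hB, hJ1, hJ2, c1]
  have hN2 : (2:ℝ) ≤ (n:ℝ) := by exact_mod_cast hn
  have hN0 : (n:ℝ) ≠ 0 := by linarith
  have hN1 : (n:ℝ) - 1 ≠ 0 := by
    intro h; linarith
  have hqn : (1-μ)^n = (1-μ)^(n-1) * (1-μ) := by rw [← pow_succ, e1]
  rw [hqn]
  field_simp
  ring
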